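/- For every real symmetric traceless 3×3 matrix Q with tr(Q²) = 1, the signed biaxiality β̃(Q) := √6 · tr(Q³) lies in the closed interval [−1, 1]. -/

import Mathlib

lemma biax_key (a b c : ℝ) (h1 : a + b + c = 0) (h2 : a ^ 2 + b ^ 2 + c ^ 2 = 1) :
    6 * (a ^ 3 + b ^ 3 + c ^ 3) ^ 2 ≤ 1 := by
  have hc : c = -a - b := by linarith
  subst hc
  have hcube : (a ^ 2 + b ^ 2 + (-a - b) ^ 2) ^ 3 = 1 := by rw [h2]; norm_num
  nlinarith [mul_nonneg (sq_nonneg (a - b)) (sq_nonneg ((2 * a + b) * (a + 2 * b))), hcube]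

/-- For every real symmetric traceless 3×3 matrix `Q` with `tr(Q²) = 1`,
the signed biaxiality `β̃(Q) = √6 · tr(Q³)` lies in `[-1, 1]`. -/
theorem signed_biaxiality_mem_Icc
    (Q : Matrix (Fin 3) (Fin 3) ℝ) (hsymm : Q.IsSymm) (htr : Q.trace = 0)
    (hunit : (Q ^ 2).trace = 1) :
    Real.sqrt 6 * (Q ^ 3).trace ∈ Set.Icc (-1 : ℝ) 1 := by
  have hH : Q.IsHermitian := by
    simpa [Matrix.IsHermitian, Matrix.conjTranspose_eq_transpose_of_trivial, Matrix.IsSymm] using hsymm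
  set U : Matrix (Fin 3) (Fin 3) ℝ := (hH.eigenvectorUnitary : Matrix (Fin 3) (Fin 3) ℝ) with hU
  set D : Matrix (Fin 3) (Fin 3) ℝ :=
    Matrix.diagonal (RCLike.ofReal ∘ hH.eigenvalues) with hD
  have hQ : Q = U * D * star U := hH.spectral_theorem
  have hUU : star U * U = 1 := Matrix.mem_unitaryGroup_iff'.mp hH.eigenvectorUnitary.2
  have hUU' : ∀ X : Matrix (Fin 3) (Fin 3) ℝ, star U * (U * X) = X := fun X => by
    rw [← Matrix.mul_assoc, hUU, Matrix.one_mul]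
  have hpow : ∀ k : ℕ, 0 < k → Q ^ k = U * D ^ k * star U := by
    intro k hk
    induction k with
    | zero => omega
    | succ n ih =>
      rcases Nat.eq_zero_or_pos n with hn | hn
      · subst hn; simpa using hQ
      · rw [pow_succ, ih hn, hQ]
        simp only [Matrix.mul_assoc, hUU']
        rw [pow_succ]
        simp only [Matrix.mul_assoc]
  have htrpow : ∀ k : ℕ, 0 < k → (Q ^ k).trace = ∑ i, hH.eigenvalues i ^ k := by
    intro k hk
    rw [hpow k hk, Matrix.trace_mul_cycle, hUU, Matrix.one_mul,
      hD, Matrix.diagonal_pow, Matrix.trace_diagonal]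
    simp
  have h1 := htrpow 1 one_pos
  have h2 := htrpow 2 two_pos
  have h3 := htrpow 3 three_pos
  simp only [pow_one] at h1
  rw [h1, Fin.sum_univ_three] at htr
  rw [h2, Fin.sum_univ_three] at hunit
  rw [h3, Fin.sum_univ_three]
  have hkey := biax_key (hH.eigenvalues 0) (hH.eigenvalues 1) (hH.eigenvalues 2) htr hunit
  have hsq : (Real.sqrt 6 * (hH.eigenvalues 0 ^ 3 + hH.eigenvalues 1 ^ 3
      + hH.eigenvalues 2 ^ 3)) ^ 2 ≤ 1 := by
    have h6 : (Real.sqrt 6) ^ 2 = 6 := Real.sq_sqrt (by norm_num)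
    rw [mul_pow, h6]; exact hkey
  rw [Set.mem_Icc]
  constructor <;> nlinarith [hsq]
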